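/- Define NMTH-delete Nim positions with an odd number n ≥ 3 of heaps as vectors of n positive integers; a move chooses k ≤ n/2 (so k ≤ (n−1)/2), deletes k heaps, and splits k of the remaining heaps each into two positive parts. With P-positions defined inductively, a position ⟨z₁,…,z_n⟩ is a P-position if and only if v₂(z₁) = v₂(z₂) = ⋯ = v₂(z_n). -/

import Mathlib

inductive NPos {α : Type*} (Move : α → α → Prop) : α → Prop
  | intro {p q : α} : Move p q → (∀ r, Move q r → NPos Move r) → NPos Move p

def PPos {α : Type*} (Move : α → α → Prop) (p : α) : Prop :=
  ∀ q, Move p q → NPos Move q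

/-- A move of NMTH-delete Nim with `n` heaps: choose `k` with `1 ≤ k` and
`k ≤ n / 2` (i.e. `2 * k ≤ n`), delete `k` heaps (`d`), and split `k` of the
remaining heaps (recorded in `L` as pairs of positive parts), leaving the
rest (`u`) untouched. -/
def NMTHMove (n : ℕ) (p q : Multiset ℕ) : Prop :=
  ∃ (k : ℕ) (d u : Multiset ℕ) (L : Multiset (ℕ × ℕ)),
    1 ≤ k ∧ 2 * k ≤ n ∧
    Multiset.card d = k ∧ Multiset.card L = k ∧
    (∀ e ∈ L, 0 < e.1 ∧ 0 < e.2) ∧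
    p = d + u + L.map (fun e => e.1 + e.2) ∧
    q = u + L.map Prod.fst + L.map Prod.snd

open Multiset

-- small auxiliary lemmas, test them first
lemma myExists_le_card {α : Type*} (s : Multiset α) (k : ℕ) (hk : k ≤ Multiset.card s) :
    ∃ t, t ≤ s ∧ Multiset.card t = k := by
  induction s using Multiset.induction generalizing k with
  | empty =>
    simp only [Multiset.card_zero, Nat.le_zero] at hk
    exact ⟨0, le_refl _, by simp [hk]⟩
  | cons a s ih =>
    rcases Nat.eq_zero_or_pos k with rfl | hk0
    · exact ⟨0, Multiset.zero_le _, rfl⟩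
    · obtain ⟨k, rfl⟩ := Nat.exists_eq_add_of_le hk0
      simp only [Multiset.card_cons] at hk
      obtain ⟨t, ht, htc⟩ := ih (k := k) (by omega)
      exact ⟨a ::ₘ t, Multiset.cons_le_cons _ ht, by simp [htc, Nat.add_comm]⟩

lemma myExists_min {α : Type*} (f : α → ℕ) (s : Multiset α) (hs : s ≠ 0) :
    ∃ a ∈ s, ∀ b ∈ s, f a ≤ f b := by
  induction s using Multiset.induction with
  | empty => exact absurd rfl hs
  | cons a s ih =>
    rcases eq_or_ne s 0 with rfl | h
    · exact ⟨a, Multiset.mem_cons_self _ _, by simp⟩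
    · obtain ⟨b, hb, hmin⟩ := ih h
      rcases le_total (f a) (f b) with h1 | h1
      · refine ⟨a, Multiset.mem_cons_self _ _, fun c hc => ?_⟩
        rcases Multiset.mem_cons.mp hc with rfl | hc
        · exact le_refl _
        · exact h1.trans (hmin c hc)
      · refine ⟨b, Multiset.mem_cons_of_mem hb, fun c hc => ?_⟩
        rcases Multiset.mem_cons.mp hc with rfl | hc
        · exact h1
        · exact hmin c hc

-- valuation lemmas
lemma v2_add_ne {a b : ℕ} (ha : 0 < a) (hb : 0 < b)
    (h : padicValNat 2 a = padicValNat 2 b) :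
    padicValNat 2 (a + b) ≠ padicValNat 2 a := by
  set v := padicValNat 2 a with hv
  obtain ⟨a', ha'⟩ := pow_padicValNat_dvd (p := 2) (n := a)
  obtain ⟨b', hb'⟩ := pow_padicValNat_dvd (p := 2) (n := b)
  rw [← hv] at ha'
  rw [← h] at hb'
  have ha'0 : a' ≠ 0 := by rintro rfl; rw [mul_zero] at ha'; omega
  have hb'0 : b' ≠ 0 := by rintro rfl; rw [mul_zero] at hb'; omega
  have hva' : padicValNat 2 a' = 0 := by
    have := padicValNat.mul (p := 2) (a := 2 ^ v) (b := a') (by positivity) ha'0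
    rw [← ha', padicValNat.prime_pow, ← hv] at this
    omega
  have hvb' : padicValNat 2 b' = 0 := by
    have := padicValNat.mul (p := 2) (a := 2 ^ v) (b := b') (by positivity) hb'0
    rw [← hb', padicValNat.prime_pow, ← h] at this
    omega
  have hoa : ¬ 2 ∣ a' := fun hd => by
    have := (padicValNat_dvd_iff_le (p := 2) (n := 1) ha'0).mp (by simpa using hd)
    omega
  have hob : ¬ 2 ∣ b' := fun hd => by
    have := (padicValNat_dvd_iff_le (p := 2) (n := 1) hb'0).mp (by simpa using hd)
    omega
  have hdvd : 2 ^ (v + 1) ∣ a + b := by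
    have : a + b = 2 ^ v * (a' + b') := by rw [ha', hb', Nat.mul_add]
    rw [this, pow_succ]
    exact Nat.mul_dvd_mul_left _ (by omega)
  have := (padicValNat_dvd_iff_le (p := 2) (n := v + 1) (by omega)).mp hdvd
  omega

lemma v2_sub_pow {z v : ℕ} (hz : 0 < z) (hv : v < padicValNat 2 z) :
    0 < z - 2 ^ v ∧ padicValNat 2 (z - 2 ^ v) = v := by
  have hdvd : 2 ^ (v + 1) ∣ z := (padicValNat_dvd_iff_le (p := 2) (by omega)).mpr hv
  obtain ⟨c, hc⟩ := hdvd
  have hc0 : c ≠ 0 := by rintro rfl; simp [hc] at hz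
  have hz2 : z = 2 ^ v * (2 * c) := by rw [hc]; ring
  have h1 : z - 2 ^ v = 2 ^ v * (2 * c - 1) := by
    rw [hz2, Nat.mul_sub, mul_one]
  have hodd : ¬ 2 ∣ (2 * c - 1) := by omega
  constructor
  · rw [h1]; have : 0 < 2 ^ v := by positivity
    have : 0 < 2 * c - 1 := by omega
    positivity
  · rw [h1, padicValNat.mul (by positivity) (by omega), padicValNat.prime_pow,
      padicValNat.eq_zero_of_not_dvd hodd]
    omega

def Eq2 (Z : Multiset ℕ) : Prop :=
  ∀ x ∈ Z, ∀ y ∈ Z, padicValNat 2 x = padicValNat 2 y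

lemma move_card {n : ℕ} {p q : Multiset ℕ} (h : NMTHMove n p q) :
    Multiset.card q = Multiset.card p := by
  obtain ⟨k, d, u, L, hk, hkn, hd, hL, hpos, hp, hq⟩ := h
  simp [hp, hq, hd, hL]; omega

lemma move_pos {n : ℕ} {p q : Multiset ℕ} (h : NMTHMove n p q)
    (hpos : ∀ x ∈ p, 0 < x) : ∀ x ∈ q, 0 < x := by
  obtain ⟨k, d, u, L, hk, hkn, hd, hL, hLpos, hp, hq⟩ := h
  intro x hx
  rw [hq] at hx
  rcases Multiset.mem_add.mp hx with hx | hx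
  · rcases Multiset.mem_add.mp hx with hx | hx
    · exact hpos x (by rw [hp]; exact Multiset.mem_add.mpr (Or.inl (Multiset.mem_add.mpr (Or.inr hx))))
    · obtain ⟨e, he, rfl⟩ := Multiset.mem_map.mp hx
      exact (hLpos e he).1
  · obtain ⟨e, he, rfl⟩ := Multiset.mem_map.mp hx
    exact (hLpos e he).2

lemma move_sum_lt {n : ℕ} {p q : Multiset ℕ} (h : NMTHMove n p q)
    (hpos : ∀ x ∈ p, 0 < x) : q.sum < p.sum := by
  obtain ⟨k, d, u, L, hk, hkn, hd, hL, hLpos, hp, hq⟩ := h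
  have hd0 : d ≠ 0 := by
    intro h0; rw [h0] at hd; simp at hd; omega
  obtain ⟨x, hx⟩ := Multiset.exists_mem_of_ne_zero hd0
  have hxp : x ∈ p := by rw [hp]; exact Multiset.mem_add.mpr (Or.inl (Multiset.mem_add.mpr (Or.inl hx)))
  have hxpos : 0 < x := hpos x hxp
  have hdsum : 0 < d.sum := lt_of_lt_of_le hxpos (Multiset.le_sum_of_mem hx)
  have hsum : p.sum = d.sum + q.sum := by
    rw [hp, hq]
    simp only [Multiset.sum_add]
    rw [Multiset.sum_map_add]
    ring
  omega

/-- Any move from an all-equal-valuation position gives a non-equal position. -/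
lemma move_from_eq {n : ℕ} {p q : Multiset ℕ} (hodd : Odd n)
    (hcard : Multiset.card p = n) (hpos : ∀ x ∈ p, 0 < x)
    (heq : Eq2 p) (h : NMTHMove n p q) : ¬ Eq2 q := by
  obtain ⟨k, d, u, L, hk, hkn, hd, hL, hLpos, hp, hq⟩ := h
  have hcards : Multiset.card d + Multiset.card u + Multiset.card L = n := by
    rw [← hcard, hp]; simp
  have hu0 : u ≠ 0 := by
    intro h0
    rw [h0] at hcards
    simp [hd, hL] at hcards
    obtain ⟨m, hm⟩ := hodd
    omega
  obtain ⟨x₀, hx₀⟩ := Multiset.exists_mem_of_ne_zero hu0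
  have hL0 : L ≠ 0 := by
    intro h0; rw [h0] at hL; simp at hL; omega
  obtain ⟨e, he⟩ := Multiset.exists_mem_of_ne_zero hL0
  intro heq'
  -- memberships in q
  have hx₀q : x₀ ∈ q := by
    rw [hq]; exact Multiset.mem_add.mpr (Or.inl (Multiset.mem_add.mpr (Or.inl hx₀)))
  have he1q : e.1 ∈ q := by
    rw [hq]
    exact Multiset.mem_add.mpr (Or.inl (Multiset.mem_add.mpr (Or.inr
      (Multiset.mem_map.mpr ⟨e, he, rfl⟩))))
  have he2q : e.2 ∈ q := by
    rw [hq]; exact Multiset.mem_add.mpr (Or.inr (Multiset.mem_map.mpr ⟨e, he, rfl⟩))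
  -- memberships in p
  have hx₀p : x₀ ∈ p := by
    rw [hp]; exact Multiset.mem_add.mpr (Or.inl (Multiset.mem_add.mpr (Or.inr hx₀)))
  have hep : e.1 + e.2 ∈ p := by
    rw [hp]; exact Multiset.mem_add.mpr (Or.inr (Multiset.mem_map.mpr ⟨e, he, rfl⟩))
  have h12 : padicValNat 2 e.1 = padicValNat 2 e.2 := heq' _ he1q _ he2q
  have hsum : padicValNat 2 (e.1 + e.2) = padicValNat 2 x₀ := heq _ hep _ hx₀p
  have h1x : padicValNat 2 e.1 = padicValNat 2 x₀ := heq' _ he1q _ hx₀q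
  exact v2_add_ne (hLpos e he).1 (hLpos e he).2 h12 (by omega)

/-- From any non-equal position there is a move to an all-equal position. -/
lemma move_to_eq {n : ℕ} {Z : Multiset ℕ} (hn : 3 ≤ n)
    (hcard : Multiset.card Z = n) (hpos : ∀ x ∈ Z, 0 < x)
    (hne : ¬ Eq2 Z) : ∃ Q, NMTHMove n Z Q ∧ Eq2 Q := by
  have hZ0 : Z ≠ 0 := by intro h0; rw [h0] at hcard; simp at hcard; omega
  obtain ⟨x₀, hx₀, hmin⟩ := myExists_min (padicValNat 2) Z hZ0
  set v := padicValNat 2 x₀ with hv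
  classical
  set low := Z.filter (fun x => padicValNat 2 x = v) with hlow
  set high := Z.filter (fun x => ¬ padicValNat 2 x = v) with hhigh
  have hsplit : low + high = Z := Multiset.filter_add_not _ Z
  have hlowmem : ∀ x ∈ low, padicValNat 2 x = v := fun x hx => (Multiset.mem_filter.mp hx).2
  have hhighmem : ∀ x ∈ high, v < padicValNat 2 x := by
    intro x hx
    have h1 := (Multiset.mem_filter.mp hx).2
    have h2 := hmin x (Multiset.mem_filter.mp hx).1
    omega
  have hm1 : 1 ≤ Multiset.card low := by
    have hmem : x₀ ∈ low := Multiset.mem_filter.mpr ⟨hx₀, rfl⟩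
    exact Multiset.card_pos.mpr (fun h0 => by rw [h0] at hmem; exact absurd hmem (Multiset.notMem_zero _))
  have hh1 : 1 ≤ Multiset.card high := by
    refine Multiset.card_pos.mpr (fun h0 => ?_)
    apply hne
    intro x hx y hy
    have hxl : x ∈ low := by
      have := hsplit ▸ hx
      rcases Multiset.mem_add.mp ((hsplit.symm ▸ hx : x ∈ low + high)) with h | h
      · exact h
      · rw [h0] at h; simp at h
    have hyl : y ∈ low := by
      rcases Multiset.mem_add.mp ((hsplit.symm ▸ hy : y ∈ low + high)) with h | h
      · exact h
      · rw [h0] at h; simp at h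
    rw [hlowmem x hxl, hlowmem y hyl]
  set h := Multiset.card high with hhc
  set m := Multiset.card low with hmc
  have hmn : m + h = n := by rw [← hcard, ← hsplit]; simp; rfl
  set k := (h + 1) / 2 with hk
  have hk1 : 1 ≤ k := by omega
  have hkh : k ≤ h := by omega
  have h2k : h ≤ 2 * k := by omega
  have h2kh : 2 * k - h ≤ 1 := by omega
  have hkn : 2 * k ≤ n := by omega
  obtain ⟨S, hSle, hScard⟩ := myExists_le_card high k hkh
  obtain ⟨T, hTle, hTcard⟩ := myExists_le_card low (2 * k - h) (by omega)
  set R := high - S with hR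
  have hRcard : Multiset.card R = h - k := by rw [hR, Multiset.card_sub hSle]; omega
  set d := R + T with hd
  set u := low - T with hu
  set L := S.map (fun z => ((2 : ℕ) ^ v, z - 2 ^ v)) with hL
  have hSmem : ∀ z ∈ S, z ∈ high := fun z hz => Multiset.mem_of_le hSle hz
  have hSsub : ∀ z ∈ S, 0 < z - 2 ^ v ∧ padicValNat 2 (z - 2 ^ v) = v := by
    intro z hz
    exact v2_sub_pow (hpos z ((hsplit ▸ Multiset.mem_add.mpr (Or.inr (hSmem z hz)))))
      (hhighmem z (hSmem z hz))
  refine ⟨u + L.map Prod.fst + L.map Prod.snd, ⟨k, d, u, L, hk1, hkn, ?_, ?_, ?_, ?_, rfl⟩, ?_⟩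
  · rw [hd]; simp [hRcard, hTcard]; omega
  · rw [hL]; simp [hScard]
  · intro e he
    rw [hL] at he
    obtain ⟨z, hz, rfl⟩ := Multiset.mem_map.mp he
    exact ⟨by positivity, (hSsub z hz).1⟩
  · -- Z = d + u + L.map (fun e => e.1 + e.2)
    have hmap : L.map (fun e => e.1 + e.2) = S := by
      rw [hL, Multiset.map_map]
      have hpt : ∀ z ∈ S, ((fun e : ℕ × ℕ => e.1 + e.2) ∘
          (fun z => ((2 : ℕ) ^ v, z - 2 ^ v))) z = id z := by
        intro z hz
        have h1 := (hSsub z hz).1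
        simp only [Function.comp_apply, id_eq]
        omega
      rw [Multiset.map_congr rfl hpt, Multiset.map_id]
    rw [hmap, hd, hu]
    have h1 : low - T + T = low := tsub_add_cancel_of_le hTle
    have h2 : R + S = high := by rw [hR]; exact tsub_add_cancel_of_le hSle
    calc Z = low + high := hsplit.symm
      _ = (low - T + T) + (R + S) := by rw [h1, h2]
      _ = R + T + (low - T) + S := by ac_rfl
  · -- Eq2
    intro x hx y hy
    have key : ∀ x ∈ u + L.map Prod.fst + L.map Prod.snd, padicValNat 2 x = v := by
      intro x hx
      rcases Multiset.mem_add.mp hx with hx | hx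
      · rcases Multiset.mem_add.mp hx with hx | hx
        · exact hlowmem x (Multiset.mem_of_le (Multiset.sub_le_self _ _) hx)
        · obtain ⟨e, he, rfl⟩ := Multiset.mem_map.mp hx
          rw [hL] at he
          obtain ⟨z, hz, rfl⟩ := Multiset.mem_map.mp he
          exact padicValNat.prime_pow v
      · obtain ⟨e, he, rfl⟩ := Multiset.mem_map.mp hx
        rw [hL] at he
        obtain ⟨z, hz, rfl⟩ := Multiset.mem_map.mp he
        exact (hSsub z hz).2
    rw [key x hx, key y hy]

lemma main_iff {n : ℕ} (hn : 3 ≤ n) (hodd : Odd n) :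
    ∀ N (Z : Multiset ℕ), Z.sum ≤ N → Multiset.card Z = n → (∀ x ∈ Z, 0 < x) →
      (PPos (NMTHMove n) Z ↔ Eq2 Z) := by
  intro N
  induction N using Nat.strong_induction_on with
  | _ N ih =>
    intro Z hsum hcard hpos
    constructor
    · intro hP
      by_contra hne
      obtain ⟨Q, hmv, _⟩ := move_to_eq hn hcard hpos hne
      have hQcard : Multiset.card Q = n := (move_card hmv).trans hcard
      have hQpos := move_pos hmv hpos
      have hQsum : Q.sum < Z.sum := move_sum_lt hmv hpos
      obtain ⟨Q', hmv, hEqQ⟩ := move_to_eq hn hcard hpos hne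
      have hQ'card : Multiset.card Q' = n := (move_card hmv).trans hcard
      have hQ'pos := move_pos hmv hpos
      have hQ'sum : Q'.sum < Z.sum := move_sum_lt hmv hpos
      -- Z is a P-position, so Q' (an option of Z) is an N-position
      have hNQ' : NPos (NMTHMove n) Q' := hP Q' hmv
      obtain ⟨hmv2, hP2⟩ := hNQ'
      rename_i Q''
      have hQ''card : Multiset.card Q'' = n := (move_card hmv2).trans hQ'card
      have hQ''pos := move_pos hmv2 hQ'pos
      have hQ''sum : Q''.sum < Q'.sum := move_sum_lt hmv2 hQ'pos
      have hne'' : ¬ Eq2 Q'' := move_from_eq hodd hQ'card hQ'pos hEqQ hmv2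
      have : Eq2 Q'' :=
        (ih Q''.sum (by omega) Q'' le_rfl hQ''card hQ''pos).mp hP2
      exact hne'' this
    · intro hEq Q hmv
      have hQcard : Multiset.card Q = n := (move_card hmv).trans hcard
      have hQpos := move_pos hmv hpos
      have hQsum : Q.sum < Z.sum := move_sum_lt hmv hpos
      have hneQ : ¬ Eq2 Q := move_from_eq hodd hcard hpos hEq hmv
      obtain ⟨Q', hmv', hEq'⟩ := move_to_eq hn hQcard hQpos hneQ
      have hQ'card : Multiset.card Q' = n := (move_card hmv').trans hQcard
      have hQ'pos := move_pos hmv' hQpos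
      have hQ'sum : Q'.sum < Q.sum := move_sum_lt hmv' hQpos
      have hP' : PPos (NMTHMove n) Q' :=
        (ih Q'.sum (by omega) Q' le_rfl hQ'card hQ'pos).mpr hEq'
      exact NPos.intro hmv' hP'


theorem stmt12 (n : ℕ) (hn : 3 ≤ n) (hodd : Odd n) (Z : Multiset ℕ)
    (hcard : Multiset.card Z = n) (hpos : ∀ x ∈ Z, 0 < x) :
    PPos (NMTHMove n) Z ↔
      ∀ x ∈ Z, ∀ y ∈ Z, padicValNat 2 x = padicValNat 2 y := by
  exact main_iff hn hodd Z.sum Z le_rfl hcard hpos
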